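/- arXiv:1408.5331 — 2 statements merged into one kernel-verified Lean document; each statement's English description precedes it below -/
import Mathlib

section
/- For every j with 1 ≤ j ≤ a₁ − 1, one has η_j = ⌊ω_j/a₁⌋ − ⌊ω_{j−1}/a₁⌋. -/
theorem stmt3
    (d : ℕ) (hd : 2 ≤ d)
    (a : Fin d → ℕ)
    (ha_pos : ∀ i, 0 < a i)
    (ha_mono : StrictMono a)
    (ha_gcd : Finset.univ.gcd a = 1)
    (a1 : ℕ) (ha1 : a1 = a ⟨0, by omega⟩)
    (S : Set ℕ)
    (hS : S = {m : ℕ | ∃ c : Fin d → ℕ, m = ∑ i, c i * a i})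
    (hmin : ∀ j : Fin d, ¬ ∃ c : Fin d → ℕ, c j = 0 ∧ a j = ∑ i, c i * a i)
    (F : ℕ) (hF : F ∉ S) (hFmax : ∀ m : ℕ, F < m → m ∈ S)
    (ω : ℕ → ℕ)
    (hω_mono : ∀ i j : ℕ, i < j → j < a1 → ω i < ω j)
    (hω_range : ω '' Set.Iio a1 = {w ∈ S | ¬ ∃ s ∈ S, s + a1 = w})
    (I : ℕ → Set ℕ) (hI : ∀ k, I k = Set.Icc (k * a1) ((k + 1) * a1 - 1))
    (η : ℕ → ℕ) (hη : ∀ j, η j = {k : ℕ | (I k ∩ S).ncard = j}.ncard)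
    :
    ∀ j : ℕ, 1 ≤ j → j ≤ a1 - 1 →
      (η j : ℤ) = ((ω j / a1 : ℕ) : ℤ) - ((ω (j - 1) / a1 : ℕ) : ℤ) := by
  classical
  intro j hj1 hj2
  have ha1pos : 0 < a1 := ha1 ▸ ha_pos _
  have ha1two : 2 ≤ a1 := by omega
  have hjlt : j < a1 := by omega
  -- closure of S under adding a1
  have hzS : ∀ s ∈ S, s + a1 ∈ S := by
    intro s hs
    rw [hS] at hs ⊢
    obtain ⟨c, rfl⟩ := hs
    refine ⟨fun i => c i + (if i = (⟨0, by omega⟩ : Fin d) then 1 else 0), ?_⟩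
    have hsplit : ∀ i : Fin d, (c i + (if i = (⟨0, by omega⟩ : Fin d) then 1 else 0)) * a i
        = c i * a i + (if i = (⟨0, by omega⟩ : Fin d) then a i else 0) := by
      intro i
      by_cases h : i = (⟨0, by omega⟩ : Fin d)
      · simp only [h, if_pos]; ring
      · simp [h]
    rw [Finset.sum_congr rfl (fun i _ => hsplit i), Finset.sum_add_distrib,
      Finset.sum_ite_eq' Finset.univ (⟨0, by omega⟩ : Fin d) a]
    simp [ha1]
  have haddmul : ∀ s ∈ S, ∀ t : ℕ, s + t * a1 ∈ S := by
    intro s hs t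
    induction t with
    | zero => simpa using hs
    | succ n ih =>
      have h := hzS _ ih
      have heq : s + n * a1 + a1 = s + (n + 1) * a1 := by ring
      rwa [heq] at h
  have hup : ∀ w ∈ S, ∀ x, w ≤ x → x % a1 = w % a1 → x ∈ S := by
    intro w hw x hwx hmod
    obtain ⟨t, ht⟩ := (Nat.modEq_iff_dvd' hwx).mp hmod.symm
    have hx : x = w + t * a1 := by
      rw [(Nat.sub_eq_iff_eq_add hwx).mp ht]; ring
    rw [hx]; exact haddmul w hw t
  -- Apery facts
  have hωmem : ∀ i, i < a1 → ω i ∈ S ∧ ¬ ∃ s ∈ S, s + a1 = ω i := by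
    intro i hi
    have h : ω i ∈ ω '' Set.Iio a1 := ⟨i, hi, rfl⟩
    rw [hω_range] at h
    exact h
  have hApω : ∀ w, w ∈ S → (¬ ∃ s ∈ S, s + a1 = w) → ∃ i, i < a1 ∧ ω i = w := by
    intro w h1 h2
    have h : w ∈ ω '' Set.Iio a1 := by rw [hω_range]; exact ⟨h1, h2⟩
    obtain ⟨i, hi, hiw⟩ := h
    exact ⟨i, hi, hiw⟩
  have hωmono' : ∀ i i', i ≤ i' → i' < a1 → ω i ≤ ω i' := by
    intro i i' h hi'
    rcases Nat.eq_or_lt_of_le h with rfl | h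
    · exact le_refl _
    · exact (hω_mono i i' h hi').le
  -- distinct residues
  have hres : ∀ i i', i < i' → i' < a1 → ω i % a1 ≠ ω i' % a1 := by
    intro i i' hii hi' heq
    have hlt : ω i < ω i' := hω_mono i i' hii hi'
    obtain ⟨t, ht⟩ := (Nat.modEq_iff_dvd' hlt.le).mp heq
    obtain ⟨u, rfl⟩ : ∃ u, t = u + 1 := by
      refine ⟨t - 1, ?_⟩
      rcases Nat.eq_zero_or_pos t with h0 | h0
      · subst h0; simp at ht; omega
      · omega
    have hs : ω i + u * a1 ∈ S := haddmul _ (hωmem i (lt_trans hii hi')).1 u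
    have hseq : ω i + u * a1 + a1 = ω i' := by
      rw [(Nat.sub_eq_iff_eq_add hlt.le).mp ht]; ring
    exact (hωmem i' hi').2 ⟨_, hs, hseq⟩
  have hres' : ∀ i i', i < a1 → i' < a1 → ω i % a1 = ω i' % a1 → i = i' := by
    intro i i' hi hi' h
    rcases Nat.lt_trichotomy i i' with h1 | h1 | h1
    · exact absurd h (hres i i' h1 hi')
    · exact h1
    · exact absurd h.symm (hres i' i h1 hi)
  -- every element of S is ω i + t * a1
  have hmem : ∀ s ∈ S, ∃ i, i < a1 ∧ ∃ t, s = ω i + t * a1 := by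
    intro s hs
    have hex : ∃ n, n ∈ S ∧ n % a1 = s % a1 := ⟨s, hs, rfl⟩
    obtain ⟨hmS, hmmod⟩ := Nat.find_spec hex
    have hmle : Nat.find hex ≤ s := Nat.find_min' hex ⟨hs, rfl⟩
    have hmAp : ¬ ∃ s' ∈ S, s' + a1 = Nat.find hex := by
      rintro ⟨s', hs', heq⟩
      have h2 : (s' + a1) % a1 = s' % a1 := Nat.add_mod_right s' a1
      have h1 : s' % a1 = s % a1 := by rw [← h2, heq, hmmod]
      exact Nat.find_min hex (show s' < Nat.find hex by omega) ⟨hs', h1⟩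
    obtain ⟨i, hi, hωi⟩ := hApω _ hmS hmAp
    obtain ⟨t, ht⟩ := (Nat.modEq_iff_dvd' hmle).mp hmmod
    exact ⟨i, hi, t, by rw [(Nat.sub_eq_iff_eq_add hmle).mp ht, ← hωi]; ring⟩
  -- counting elements of I k ∩ S
  have hcard : ∀ k, (I k ∩ S).ncard
      = ((Finset.range a1).filter (fun i => ω i / a1 ≤ k)).card := by
    intro k
    have hsetEq : I k ∩ S
        = ↑(((Finset.range a1).filter (fun i => ω i / a1 ≤ k)).image
            (fun i => k * a1 + ω i % a1)) := by
      ext x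
      simp only [hI, Set.mem_inter_iff, Set.mem_Icc, Finset.coe_image, Set.mem_image,
        Finset.mem_coe, Finset.mem_filter, Finset.mem_range]
      constructor
      · rintro ⟨⟨hx1, hx2⟩, hxS⟩
        obtain ⟨i, hi, t, hxt⟩ := hmem x hxS
        have hxlt : x < (k + 1) * a1 := by
          have h0 : 0 < (k + 1) * a1 := Nat.mul_pos (Nat.succ_pos k) ha1pos
          omega
        have hωle : ω i ≤ x := Nat.le.intro hxt.symm
        have hdivle : ω i / a1 ≤ k := by
          have h := (Nat.div_lt_iff_lt_mul ha1pos).mpr (lt_of_le_of_lt hωle hxlt)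
          omega
        refine ⟨i, ⟨hi, hdivle⟩, ?_⟩
        have hmodx : x % a1 = ω i % a1 := by
          rw [hxt]; exact Nat.add_mul_mod_self_right _ _ _
        have hdivx : x / a1 = k := Nat.div_eq_of_lt_le hx1 hxlt
        have hdm : x / a1 * a1 + x % a1 = x := Nat.div_add_mod' x a1
        rw [hdivx, hmodx] at hdm
        exact hdm
      · rintro ⟨i, ⟨hi, hdivle⟩, rfl⟩
        have hmod : ω i % a1 < a1 := Nat.mod_lt _ ha1pos
        have hmul : (k + 1) * a1 = k * a1 + a1 := by ring
        refine ⟨⟨Nat.le_add_right _ _, by omega⟩, ?_⟩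
        have h1 : ω i / a1 * a1 ≤ k * a1 := Nat.mul_le_mul_right a1 hdivle
        have h2 : ω i / a1 * a1 + ω i % a1 = ω i := Nat.div_add_mod' (ω i) a1
        have hle : ω i ≤ k * a1 + ω i % a1 := by omega
        have hmodeq : (k * a1 + ω i % a1) % a1 = ω i % a1 := by
          rw [Nat.add_comm, Nat.add_mul_mod_self_right]
          exact Nat.mod_mod_of_dvd _ dvd_rfl
        exact hup (ω i) (hωmem i hi).1 _ hle hmodeq
    rw [hsetEq, Set.ncard_coe_finset]
    apply Finset.card_image_of_injOn
    intro i hi i' hi' hEq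
    simp only [Finset.coe_filter, Set.mem_setOf_eq, Finset.mem_range] at hi hi'
    exact hres' i i' hi.1 hi'.1 (Nat.add_left_cancel hEq)
  -- key characterization of the counting function
  have hkey : ∀ m k, 1 ≤ m → m ≤ a1 →
      (m ≤ ((Finset.range a1).filter (fun i => ω i / a1 ≤ k)).card ↔ ω (m - 1) / a1 ≤ k) := by
    intro m k hm1 hm2
    constructor
    · intro h
      by_contra hc
      push_neg at hc
      have hsub : (Finset.range a1).filter (fun i => ω i / a1 ≤ k) ⊆ Finset.range (m - 1) := by
        intro i hi
        simp only [Finset.mem_filter, Finset.mem_range] at hi ⊢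
        by_contra hge
        push_neg at hge
        have hmono := Nat.div_le_div_right (c := a1) (hωmono' (m - 1) i hge hi.1)
        omega
      have hcardle := Finset.card_le_card hsub
      rw [Finset.card_range] at hcardle
      omega
    · intro h
      have hsub : Finset.range m ⊆ (Finset.range a1).filter (fun i => ω i / a1 ≤ k) := by
        intro i hi
        simp only [Finset.mem_range, Finset.mem_filter] at hi ⊢
        refine ⟨by omega, ?_⟩
        have hmono := Nat.div_le_div_right (c := a1) (hωmono' i (m - 1) (by omega) (by omega))
        omega
      have hcardle := Finset.card_le_card hsub
      rwa [Finset.card_range] at hcardle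
  -- the set of k with count j is an interval
  have hb : ω (j - 1) / a1 ≤ ω j / a1 :=
    Nat.div_le_div_right (hωmono' (j - 1) j (by omega) hjlt)
  have hsetj : {k : ℕ | (I k ∩ S).ncard = j} = Set.Ico (ω (j - 1) / a1) (ω j / a1) := by
    ext k
    simp only [Set.mem_setOf_eq, Set.mem_Ico, hcard k]
    constructor
    · intro h
      refine ⟨(hkey j k hj1 (by omega)).mp (le_of_eq h.symm), ?_⟩
      by_contra hc
      push_neg at hc
      have h2 := (hkey (j + 1) k (by omega) (by omega)).mpr (by simpa using hc)
      omega
    · rintro ⟨h1, h2⟩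
      have hge := (hkey j k hj1 (by omega)).mpr h1
      have hlt : ¬ (j + 1 ≤ ((Finset.range a1).filter (fun i => ω i / a1 ≤ k)).card) := by
        intro hh
        have := (hkey (j + 1) k (by omega) (by omega)).mp hh
        simp only [Nat.add_sub_cancel] at this
        omega
      omega
  rw [hη, hsetj, ← Finset.coe_Ico, Set.ncard_coe_finset, Nat.card_Ico, Nat.cast_sub hb]
end

section
/- Fix integers a₁ ≥ 2 and K ≥ 1, and let S = {0, a₁, 2a₁, …, (K−1)·a₁} ∪ {n ∈ ℕ : n ≥ K·a₁}, which is the numerical semigroup minimally generated by the d = a₁ integers a₁ and K·a₁ + (i − 1) for i = 2, …, a₁. Then the equality F + 1 = d·(F + 1 − g) holds, where F is the Frobenius number of S and g its genus. -/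
theorem stmt11
    (a1 K : ℕ) (ha1 : 2 ≤ a1) (hK : 1 ≤ K)
    (S : Set ℕ)
    (hS : S = {m : ℕ | (∃ j < K, m = j * a1) ∨ K * a1 ≤ m})
    (d : ℕ) (hd : d = a1)
    (F : ℕ) (hF : F ∉ S) (hFmax : ∀ m : ℕ, F < m → m ∈ S)
    (g : ℕ) (hg : g = {m : ℕ | m ∉ S}.ncard)
    :
    (F : ℤ) + 1 = (d : ℤ) * ((F : ℤ) + 1 - (g : ℤ)) := by
  subst hS hg
  have ha0 : 0 < a1 := by omega
  have hKa : 1 ≤ K * a1 := Nat.one_le_iff_ne_zero.mpr (by positivity)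
  -- K*a1 - 1 is a gap
  have hgap : (K * a1 - 1) ∉ {m : ℕ | (∃ j < K, m = j * a1) ∨ K * a1 ≤ m} := by
    rintro (⟨j, hj, hje⟩ | h)
    · have := Nat.mul_le_mul_right a1 (show j + 1 ≤ K by omega)
      rw [add_mul, one_mul] at this
      omega
    · omega
  -- F = K*a1 - 1
  have hFlt : F < K * a1 := by
    by_contra h
    exact hF (Or.inr (by omega))
  have hFeq : F = K * a1 - 1 := by
    by_contra h
    exact hgap (hFmax _ (by omega))
  -- complement is a finite set
  have hset : {m : ℕ | m ∉ {m : ℕ | (∃ j < K, m = j * a1) ∨ K * a1 ≤ m}}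
      = ↑(Finset.range (K * a1) \ (Finset.range K).image (· * a1)) := by
    ext m
    simp only [Set.mem_setOf_eq, Finset.coe_sdiff, Set.mem_diff, Finset.coe_image,
      Finset.coe_range, Set.mem_image, Set.mem_Iio, not_or, not_exists, not_lt, not_le]
    tauto
  have hcard : {m : ℕ | m ∉ {m : ℕ | (∃ j < K, m = j * a1) ∨ K * a1 ≤ m}}.ncard
      = K * a1 - K := by
    rw [hset, Set.ncard_coe_finset]
    have hsub : (Finset.range K).image (· * a1) ⊆ Finset.range (K * a1) := by
      intro x hx
      simp only [Finset.mem_image, Finset.mem_range] at hx ⊢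
      obtain ⟨j, hj, rfl⟩ := hx
      exact (Nat.mul_lt_mul_right ha0).mpr hj
    rw [Finset.card_sdiff_of_subset hsub, Finset.card_image_of_injective _
      (fun x y h => by simpa [Nat.mul_left_inj (by omega : a1 ≠ 0)] using h),
      Finset.card_range, Finset.card_range]
  rw [hcard, hFeq, hd]
  have hKK : K ≤ K * a1 := Nat.le_mul_of_pos_right K ha0
  push_cast [Nat.cast_sub hKK, Nat.cast_sub hKa]
  ring
end
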